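/- If a witness DAG G is compatible with a resampling table R and H is a prefix of G, then H is compatible with R. -/

import Mathlib

open scoped ENNReal BigOperators Classical

noncomputable section

variable {β : Type*}

/-- A set of bad-events is stable if no two distinct members are dependent. -/
def IsStable (dep : β → β → Prop) (I : Finset β) : Prop :=
  ∀ A ∈ I, ∀ B ∈ I, A ≠ B → ¬ dep A B

/-- Inclusive neighborhood Γ̄(B) = Γ(B) ∪ {B}. -/
def inclNbhd [Fintype β] (dep : β → β → Prop) (B : β) : Finset β :=
  Finset.univ.filter fun A => A = B ∨ dep A B

/-- Neighborhood Γ(B). -/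
def nbhd [Fintype β] (dep : β → β → Prop) (B : β) : Finset β :=
  Finset.univ.filter fun A => A ≠ B ∧ dep A B

/-- stab(I): all stable subsets of ⋃_{B ∈ I} Γ̄(B). -/
def stab [Fintype β] (dep : β → β → Prop) (I : Finset β) : Finset (Finset β) :=
  Finset.univ.filter fun J => IsStable dep J ∧ J ⊆ I.biUnion (inclNbhd dep)

/-- A stable-set sequence rooted at `I`. -/
structure StableSeq [Fintype β] (dep : β → β → Prop) (I : Finset β) where
  seq : ℕ → Finset β
  root : seq 0 = I
  stable : ∀ i, IsStable dep (seq i)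
  step : ∀ i, seq (i + 1) ∈ stab dep (seq i)
  fin : ∃ ℓ, seq ℓ = ∅

/-- The depth of a stable-set sequence: the least ℓ with S_ℓ = ∅. -/
def StableSeq.depth [Fintype β] {dep : β → β → Prop} {I : Finset β}
    (S : StableSeq dep I) : ℕ :=
  Nat.find S.fin

/-- The weight Π_i p(S_i) of a stable-set sequence. -/
def StableSeq.weight [Fintype β] {dep : β → β → Prop} {I : Finset β}
    (p : β → ℝ≥0∞) (S : StableSeq dep I) : ℝ≥0∞ :=
  ∏ i ∈ Finset.range S.depth, ∏ B ∈ S.seq i, p B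

/-- μ(I): total weight of all stable-set sequences rooted at I. -/
def mu [Fintype β] (dep : β → β → Prop) (p : β → ℝ≥0∞) (I : Finset β) : ℝ≥0∞ :=
  ∑' S : StableSeq dep I, S.weight p

/-- μ^{(h)}(I): total weight of stable-set sequences rooted at I of depth ≤ h. -/
def muD [Fintype β] (dep : β → β → Prop) (p : β → ℝ≥0∞) (I : Finset β) (h : ℕ) : ℝ≥0∞ :=
  ∑' S : {S : StableSeq dep I // S.depth ≤ h}, S.1.weight p

/-- α(B) = Σ_{J ∈ stab(B)} μ(J). -/
def alphaB [Fintype β] (dep : β → β → Prop) (p : β → ℝ≥0∞) (B : β) : ℝ≥0∞ :=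
  ∑ J ∈ stab dep {B}, mu dep p J

/-- The Shearer criterion: μ(B) < ∞ for all bad-events B. -/
def ShearerCrit [Fintype β] (dep : β → β → Prop) (p : β → ℝ≥0∞) : Prop :=
  ∀ B : β, mu dep p {B} < ⊤

/-- A witness DAG over bad-events β with dependency relation `dep`: a finite
acyclic labeled digraph in which two distinct vertices are joined by an edge
(in one direction or the other) iff their labels are dependent. Vertices are
drawn from ℕ. -/
structure WDag (β : Type*) (dep : β → β → Prop) where
  verts : Finset ℕ
  Edge : ℕ → ℕ → Prop
  label : ℕ → β
  support : ∀ u v, Edge u v → u ∈ verts ∧ v ∈ verts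
  acyclic : ∀ v, ¬ Relation.TransGen Edge v v
  edge_iff : ∀ u ∈ verts, ∀ v ∈ verts, u ≠ v →
    ((Edge u v ∨ Edge v u) ↔ dep (label u) (label v))

namespace WDag

variable {dep : β → β → Prop}

/-- depth(G): the maximum length of a directed path in G. -/
def depth (G : WDag β dep) : ℕ :=
  sSup {n | ∃ l : List ℕ, (∀ x ∈ l, x ∈ G.verts) ∧ l.Chain' G.Edge ∧ l.length = n}

/-- v is a sink node of G. -/
def IsSink (G : WDag β dep) (v : ℕ) : Prop :=
  v ∈ G.verts ∧ ∀ w, ¬ G.Edge v w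

/-- G has exactly one sink node. -/
def SingleSink (G : WDag β dep) : Prop := ∃! v, G.IsSink v

/-- H is a prefix of G: an induced subgraph closed under taking in-neighbors
(equivalently, H = G(U), the set of vertices with a directed path into U, for
some vertex set U). -/
def IsPrefix (H G : WDag β dep) : Prop :=
  H.verts ⊆ G.verts ∧ (∀ v ∈ H.verts, H.label v = G.label v) ∧
    (∀ u v, H.Edge u v ↔ (G.Edge u v ∧ u ∈ H.verts ∧ v ∈ H.verts)) ∧
    (∀ u v, G.Edge u v → v ∈ H.verts → u ∈ H.verts)

end WDag

namespace WDag

variable {dep : β → β → Prop}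

/-- The number of vertices u of G with i ∈ var(L(u)) and a directed path from
u to v (including v itself). -/
def ancCount {ι : Type*} (G : WDag β dep) (var : β → Finset ι) (v : ℕ) (i : ι) : ℕ :=
  (G.verts.filter fun u => i ∈ var (G.label u) ∧ Relation.ReflTransGen G.Edge u v).card

/-- The configuration X_{v,R} ∈ Σ^n associated to a vertex v of G and a
resampling table R. -/
def config {ι σα : Type*} (G : WDag β dep) (var : β → Finset ι)
    (R : ι → ℕ → σα) (v : ℕ) : ι → σα :=
  fun i => R i (G.ancCount var v i - 1)

/-- G is compatible with the resampling table R: for every vertex v, the event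
labeling v holds on the configuration X_{v,R}. -/
def Compatible {ι σα : Type*} (G : WDag β dep) (var : β → Finset ι)
    (f : β → (ι → σα) → Prop) (R : ι → ℕ → σα) : Prop :=
  ∀ v ∈ G.verts, f (G.label v) (G.config var R v)

end WDag

/-- compatibility with a resampling table is inherited by
prefixes. -/
theorem prefix_compatible {ι σα : Type*} (dep : β → β → Prop)
    (var : β → Finset ι) (f : β → (ι → σα) → Prop) (R : ι → ℕ → σα)
    (G H : WDag β dep) (hG : G.Compatible var f R) (hpre : H.IsPrefix G) :
    H.Compatible var f R :=  by
  obtain ⟨hsub, hlab, hedge, hclosed⟩ := hpre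
  intro v hv
  have key : ∀ u w, w ∈ H.verts → Relation.ReflTransGen G.Edge u w →
      u ∈ H.verts ∧ Relation.ReflTransGen H.Edge u w := by
    intro u w hw h
    induction h using Relation.ReflTransGen.head_induction_on with
    | refl => exact ⟨hw, Relation.ReflTransGen.refl⟩
    | head e _ ih =>
      obtain ⟨hb, hrt⟩ := ih
      have ha := hclosed _ _ e hb
      exact ⟨ha, Relation.ReflTransGen.head ((hedge _ _).2 ⟨e, ha, hb⟩) hrt⟩
  have hmono : ∀ u w, Relation.ReflTransGen H.Edge u w →
      Relation.ReflTransGen G.Edge u w := by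
    intro u w h
    exact Relation.ReflTransGen.mono (fun a b hab => ((hedge a b).1 hab).1) u w h
  have hcnt : ∀ i, H.ancCount var v i = G.ancCount var v i := by
    intro i
    unfold WDag.ancCount
    congr 1
    ext u
    simp only [Finset.mem_filter]
    constructor
    · rintro ⟨hu, hvar, hrt⟩
      exact ⟨hsub hu, by rwa [hlab u hu] at hvar, hmono _ _ hrt⟩
    · rintro ⟨hu, hvar, hrt⟩
      obtain ⟨hu', hrt'⟩ := key u v hv hrt
      exact ⟨hu', by rwa [hlab u hu'], hrt'⟩
  have hconf : H.config var R v = G.config var R v := by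
    funext i
    simp [WDag.config, hcnt i]
  rw [hlab v hv, hconf]
  exact hG v (hsub hv)
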